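/- Existence of near-balanced linear codes: for every 0 < ε < 1 and sufficiently large n, there exists m ≤ C n/ε² and α ∈ GF(2^m) such that every nonzero x ∈ F_2^n has |x| + |αx| ≥ (1-ε)(n+m)/2; consequently there exists an ε-biased subset of F_2^n of size O(n/ε²). -/

import Mathlib

open Real

private lemma hasDerivAt_G {t : ℝ} (h1 : -1 < t) (h2 : t < 1) :
    HasDerivAt (fun s : ℝ => log (1 + s) - log (1 - s) - 2 * s)
      ((1 + t)⁻¹ + (1 - t)⁻¹ - 2) t := by
  have ha : HasDerivAt (fun s : ℝ => 1 + s) 1 t := (hasDerivAt_id t).const_add 1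
  have hb : HasDerivAt (fun s : ℝ => 1 - s) (-1) t := (hasDerivAt_id t).const_sub 1
  have hl1 : HasDerivAt (fun s : ℝ => log (1 + s)) ((1 + t)⁻¹ * 1) t :=
    (Real.hasDerivAt_log (by linarith)).comp t ha
  have hl2 : HasDerivAt (fun s : ℝ => log (1 - s)) ((1 - t)⁻¹ * (-1)) t :=
    (Real.hasDerivAt_log (by linarith)).comp t hb
  have h3 : HasDerivAt (fun s : ℝ => 2 * s) 2 t := by
    simpa using (hasDerivAt_id t).const_mul 2
  refine ((hl1.sub hl2).sub h3).congr_deriv ?_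
  ring

private lemma artanh_ge {ε : ℝ} (h0 : 0 ≤ ε) (h1 : ε < 1) :
    2 * ε ≤ log (1 + ε) - log (1 - ε) := by
  rcases eq_or_lt_of_le h0 with h | h
  · simp [← h]
  have mono : MonotoneOn (fun s : ℝ => log (1 + s) - log (1 - s) - 2 * s) (Set.Icc 0 ε) := by
    apply monotoneOn_of_deriv_nonneg (convex_Icc 0 ε)
    · intro t ht
      exact (hasDerivAt_G (by linarith [ht.1]) (by linarith [ht.2])).continuousAt.continuousWithinAt
    · intro t ht
      rw [interior_Icc] at ht
      exact (hasDerivAt_G (by linarith [ht.1]) (by linarith [ht.2])).differentiableAt.differentiableWithinAt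
    · intro t ht
      rw [interior_Icc] at ht
      have h1t : (0:ℝ) < 1 + t := by linarith [ht.1]
      have h2t : (0:ℝ) < 1 - t := by linarith [ht.2]
      rw [(hasDerivAt_G (by linarith) (by linarith)).deriv]
      have key : (1 + t)⁻¹ + (1 - t)⁻¹ - 2 = 2 * t ^ 2 / ((1 + t) * (1 - t)) := by
        field_simp
        ring
      rw [key]
      positivity
  have := mono (Set.left_mem_Icc.2 h0) (Set.right_mem_Icc.2 h0) h0
  simp only [add_zero, sub_zero, mul_zero, log_one, sub_self] at this
  linarith

private lemma hasDerivAt_F {t : ℝ} (h1 : -1 < t) (h2 : t < 1) :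
    HasDerivAt (fun s : ℝ => (1 + s) * log (1 + s) + (1 - s) * log (1 - s) - s ^ 2)
      (log (1 + t) - log (1 - t) - 2 * t) t := by
  have ha : HasDerivAt (fun s : ℝ => 1 + s) 1 t := (hasDerivAt_id t).const_add 1
  have hb : HasDerivAt (fun s : ℝ => 1 - s) (-1) t := (hasDerivAt_id t).const_sub 1
  have hl1 : HasDerivAt (fun s : ℝ => log (1 + s)) ((1 + t)⁻¹ * 1) t :=
    (Real.hasDerivAt_log (by linarith)).comp t ha
  have hl2 : HasDerivAt (fun s : ℝ => log (1 - s)) ((1 - t)⁻¹ * (-1)) t :=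
    (Real.hasDerivAt_log (by linarith)).comp t hb
  have hsq : HasDerivAt (fun s : ℝ => s ^ 2) (2 * t) t := by
    simpa using (hasDerivAt_pow 2 t)
  have := ((ha.mul hl1).add (hb.mul hl2)).sub hsq
  refine this.congr_deriv ?_
  have e1 : (1 + t) * ((1 + t)⁻¹ * 1) = 1 := by
    rw [mul_one, mul_inv_cancel₀ (by linarith : (1:ℝ) + t ≠ 0)]
  have e2 : (1 - t) * ((1 - t)⁻¹ * (-1)) = -1 := by
    rw [show (1 - t) * ((1 - t)⁻¹ * (-1)) = (1 - t) * (1 - t)⁻¹ * (-1) by ring,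
      mul_inv_cancel₀ (by linarith : (1:ℝ) - t ≠ 0)]
    ring
  rw [e1, e2]
  ring

private lemma pinsker {ε : ℝ} (h0 : 0 ≤ ε) (h1 : ε < 1) :
    ε ^ 2 ≤ (1 + ε) * log (1 + ε) + (1 - ε) * log (1 - ε) := by
  rcases eq_or_lt_of_le h0 with h | h
  · simp [← h]
  have mono : MonotoneOn
      (fun s : ℝ => (1 + s) * log (1 + s) + (1 - s) * log (1 - s) - s ^ 2) (Set.Icc 0 ε) := by
    apply monotoneOn_of_deriv_nonneg (convex_Icc 0 ε)
    · intro t ht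
      exact (hasDerivAt_F (by linarith [ht.1]) (by linarith [ht.2])).continuousAt.continuousWithinAt
    · intro t ht
      rw [interior_Icc] at ht
      exact (hasDerivAt_F (by linarith [ht.1]) (by linarith [ht.2])).differentiableAt.differentiableWithinAt
    · intro t ht
      rw [interior_Icc] at ht
      rw [(hasDerivAt_F (by linarith [ht.1]) (by linarith [ht.2])).deriv]
      have := artanh_ge (le_of_lt ht.1) (by linarith [ht.2])
      linarith
  have := mono (Set.left_mem_Icc.2 h0) (Set.right_mem_Icc.2 h0) h0
  simp only [add_zero, sub_zero, mul_zero, log_one, sub_self] at this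
  norm_num at this
  linarith

private lemma log_le_div_e {y : ℝ} (hy : 0 < y) : log y ≤ y / exp 1 := by
  have h := Real.log_le_sub_one_of_pos (x := y / exp 1) (by positivity)
  rw [Real.log_div (ne_of_gt hy) (by positivity), Real.log_exp] at h
  linarith

private lemma key_lin {ε : ℝ} (hε0 : 0 < ε) (hε1 : ε < 1) (n m : ℕ)
    (hm : 3 * (n : ℝ) / ε ^ 2 ≤ m) :
    (n : ℝ) * log 2 + ((1 - ε) * ((n : ℝ) + m) / 2) * (log (1 + ε) - log (1 - ε))
      ≤ m * log (1 + ε) := by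
  set L : ℝ := log (1 + ε) - log (1 - ε) with hL
  have h1ε : (0:ℝ) < 1 + ε := by linarith
  have h2ε : (0:ℝ) < 1 - ε := by linarith
  have hp : ε ^ 2 ≤ (1 + ε) * log (1 + ε) + (1 - ε) * log (1 - ε) :=
    pinsker (le_of_lt hε0) hε1
  -- bound (1-ε) * L ≤ log 2 + 1/exp 1
  have hlog2 : log (1 + ε) ≤ log 2 := by
    apply Real.log_le_log (by linarith) (by linarith)
  have hlogpos : 0 ≤ log (1 + ε) := Real.log_nonneg (by linarith)
  have hneg : -(1 - ε) * log (1 - ε) ≤ (exp 1)⁻¹ := by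
    have h := log_le_div_e (y := (1 - ε)⁻¹) (by positivity)
    rw [Real.log_inv] at h
    have := mul_le_mul_of_nonneg_left h (le_of_lt h2ε)
    calc -(1 - ε) * log (1 - ε) = (1 - ε) * (-log (1 - ε)) := by ring
      _ ≤ (1 - ε) * ((1 - ε)⁻¹ / exp 1) := this
      _ = (exp 1)⁻¹ := by
          field_simp
  have hL1 : (1 - ε) * L ≤ log 2 + (exp 1)⁻¹ := by
    have : (1 - ε) * log (1 + ε) ≤ log 2 := by
      nlinarith
    have expand : (1 - ε) * L = (1 - ε) * log (1 + ε) + (-(1 - ε) * log (1 - ε)) := by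
      rw [hL]; ring
    linarith
  -- numeric: log 2 + ((1-ε)L)/2 ≤ 3/2
  have hnum : log 2 + (1 - ε) * L / 2 ≤ 3 / 2 := by
    have he : (2.7182818283 : ℝ) < exp 1 := Real.exp_one_gt_d9
    have hei : (exp 1)⁻¹ ≤ (2.7182818283 : ℝ)⁻¹ := by
      apply inv_anti₀ (by norm_num) (le_of_lt he)
    have hl2 : log 2 < 0.6931471808 := Real.log_two_lt_d9
    rw [show (2.7182818283 : ℝ)⁻¹ = 1 / 2.7182818283 by ring] at hei
    nlinarith
  -- RHS bracket : log(1+ε) - (1-ε)L/2 = h/2 ≥ ε²/2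
  have hbr : log (1 + ε) - (1 - ε) * L / 2
      = ((1 + ε) * log (1 + ε) + (1 - ε) * log (1 - ε)) / 2 := by
    rw [hL]; ring
  have hbr2 : ε ^ 2 / 2 ≤ log (1 + ε) - (1 - ε) * L / 2 := by
    rw [hbr]; linarith
  -- m * (ε²/2) ≥ (3/2) n
  have hm2 : (3 / 2 : ℝ) * n ≤ m * (ε ^ 2 / 2) := by
    have hε2 : (0:ℝ) < ε ^ 2 := by positivity
    rw [div_le_iff₀ hε2] at hm
    nlinarith
  have hLnonneg : 0 ≤ L := by
    rw [hL]
    have := Real.log_le_log h2ε (by linarith : 1 - ε ≤ 1 + ε)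
    linarith
  -- combine
  have hleft : (n : ℝ) * (log 2 + (1 - ε) * L / 2) ≤ (3 / 2 : ℝ) * n := by
    have : (0:ℝ) ≤ (n:ℝ) := Nat.cast_nonneg n
    nlinarith
  have hright : (m : ℝ) * (ε ^ 2 / 2) ≤ m * (log (1 + ε) - (1 - ε) * L / 2) := by
    have : (0:ℝ) ≤ (m:ℝ) := Nat.cast_nonneg m
    nlinarith
  nlinarith

private lemma key_rpow {ε : ℝ} (hε0 : 0 < ε) (hε1 : ε < 1) (n m : ℕ)
    (hm : 3 * (n : ℝ) / ε ^ 2 ≤ m) :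
    (2:ℝ) ^ n * (((1 - ε)/(1 + ε)) ^ (-((1 - ε) * ((n : ℝ) + m) / 2))
        * (1 + (1 - ε)/(1 + ε)) ^ m) ≤ 2 ^ m := by
  have h1ε : (0:ℝ) < 1 + ε := by linarith
  have h2ε : (0:ℝ) < 1 - ε := by linarith
  set lam : ℝ := (1 - ε)/(1 + ε) with hlam
  have hlam0 : 0 < lam := by positivity
  set T : ℝ := (1 - ε) * ((n : ℝ) + m) / 2 with hT
  have e1 : (2:ℝ) ^ n = exp ((n:ℝ) * log 2) := by
    rw [← Real.log_pow, Real.exp_log (by positivity)]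
  have e2 : (2:ℝ) ^ m = exp ((m:ℝ) * log 2) := by
    rw [← Real.log_pow, Real.exp_log (by positivity)]
  have e3 : (1 + lam) ^ m = exp ((m:ℝ) * log (1 + lam)) := by
    rw [← Real.log_pow, Real.exp_log (by positivity)]
  have e4 : lam ^ (-T) = exp ((-T) * log lam) := by
    rw [Real.rpow_def_of_pos hlam0]
    ring_nf
  rw [e1, e2, e3, e4, ← Real.exp_add, ← Real.exp_add, Real.exp_le_exp]
  have hl1 : log (1 + lam) = log 2 - log (1 + ε) := by
    rw [hlam, show 1 + (1 - ε)/(1 + ε) = 2 / (1 + ε) by field_simp; ring,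
      Real.log_div (by norm_num) (ne_of_gt h1ε)]
  have hl2 : log lam = log (1 - ε) - log (1 + ε) := by
    rw [hlam, Real.log_div (ne_of_gt h2ε) (ne_of_gt h1ε)]
  have := key_lin hε0 hε1 n m hm
  rw [hl1, hl2, hT]
  ring_nf
  ring_nf at this
  linarith

theorem stmt_18 (ε : ℝ) (hε0 : 0 < ε) (hε1 : ε < 1) :
    ∃ N : ℕ, ∀ n : ℕ, N ≤ n →
      ∀ (F : Type) [Field F] [Fintype F] [DecidableEq F]
        (b : F ≃+ (Fin ⌈3 * n / ε ^ 2⌉₊ → ZMod 2)) (ι : (Fin n → ZMod 2) →+ F),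
        Function.Injective ι →
        ∃ α : F, ∀ x : Fin n → ZMod 2, x ≠ 0 →
          (1 - ε) * ((n : ℝ) + ⌈3 * n / ε ^ 2⌉₊) / 2 ≤
            ((Finset.univ.filter (fun j : Fin n => x j = 1)).card : ℝ) +
              ((Finset.univ.filter
                  (fun i : Fin ⌈3 * n / ε ^ 2⌉₊ => b (α * ι x) i = 1)).card : ℝ) := by
  refine ⟨1, fun n hn => ?_⟩
  classical
  set m : ℕ := ⌈3 * (n:ℝ) / ε ^ 2⌉₊ with hmdef
  intro F _ _ _ b ι hι
  have hm : 3 * (n : ℝ) / ε ^ 2 ≤ m := Nat.le_ceil _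
  set T : ℝ := (1 - ε) * ((n : ℝ) + m) / 2 with hTdef
  by_contra hcon
  push_neg at hcon
  -- hcon : ∀ α, ∃ x, x ≠ 0 ∧ ... < T
  set lam : ℝ := (1 - ε)/(1 + ε) with hlam
  have h1ε : (0:ℝ) < 1 + ε := by linarith
  have h2ε : (0:ℝ) < 1 - ε := by linarith
  have hlam0 : 0 < lam := by positivity
  have hlam1 : lam ≤ 1 := by
    rw [hlam, div_le_one h1ε]; linarith
  set wtW : (Fin m → ZMod 2) → ℕ :=
    fun w => (Finset.univ.filter (fun i => w i = 1)).card with hwtW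
  set Bad : (Fin n → ZMod 2) → Finset F := fun x =>
    Finset.univ.filter (fun α =>
      (((Finset.univ.filter (fun j : Fin n => x j = 1)).card : ℝ)
        + ((Finset.univ.filter (fun i : Fin m => b (α * ι x) i = 1)).card : ℝ) < T)) with hBad
  set badW : Finset (Fin m → ZMod 2) :=
    Finset.univ.filter (fun w => ((wtW w : ℝ) < T)) with hbadW
  -- covering
  have cover : (Finset.univ : Finset F)
      ⊆ ((Finset.univ : Finset (Fin n → ZMod 2)).erase 0).biUnion Bad := by
    intro α _
    obtain ⟨x, hx0, hxlt⟩ := hcon α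
    exact Finset.mem_biUnion.2 ⟨x, Finset.mem_erase.2 ⟨hx0, Finset.mem_univ x⟩,
      Finset.mem_filter.2 ⟨Finset.mem_univ α, hxlt⟩⟩
  have card1 : Fintype.card F ≤
      ∑ x ∈ (Finset.univ : Finset (Fin n → ZMod 2)).erase 0, (Bad x).card := by
    rw [← Finset.card_univ]
    exact (Finset.card_le_card cover).trans Finset.card_biUnion_le
  -- Bad x injects into badW
  have hBadle : ∀ x : Fin n → ZMod 2, x ≠ 0 → (Bad x).card ≤ badW.card := by
    intro x hx0
    have hιx : ι x ≠ 0 := by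
      intro h
      exact hx0 (hι (by rw [h, map_zero]))
    apply Finset.card_le_card_of_injOn (fun α => b (α * ι x))
    · intro α hα
      rw [hBad] at hα
      have := (Finset.mem_filter.1 hα).2
      rw [hbadW]
      refine Finset.mem_filter.2 ⟨Finset.mem_univ _, ?_⟩
      have hnn : (0:ℝ) ≤ ((Finset.univ.filter (fun j : Fin n => x j = 1)).card : ℝ) :=
        Nat.cast_nonneg _
      simp only [hwtW]
      linarith
    · intro α₁ _ α₂ _ h
      have := b.injective h
      exact mul_left_injective₀ hιx this
  -- weight generating function
  have hsum : ∑ w : Fin m → ZMod 2, lam ^ (wtW w) = (1 + lam) ^ m := by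
    have hterm : ∀ w : Fin m → ZMod 2,
        lam ^ (wtW w) = ∏ i : Fin m, (if w i = 1 then lam else 1) := by
      intro w
      rw [Finset.prod_ite, Finset.prod_const, Finset.prod_const, one_pow, mul_one]
    calc ∑ w : Fin m → ZMod 2, lam ^ (wtW w)
        = ∑ w : Fin m → ZMod 2, ∏ i : Fin m, (if w i = 1 then lam else 1) := by
          exact Finset.sum_congr rfl (fun w _ => hterm w)
      _ = ∏ i : Fin m, ∑ c : ZMod 2, (if c = 1 then lam else 1) := by
          rw [Finset.prod_univ_sum (fun _ => Finset.univ)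
            (fun (i : Fin m) (c : ZMod 2) => if c = 1 then lam else 1),
            Fintype.piFinset_univ]
      _ = (1 + lam) ^ m := by
          rw [show ∑ c : ZMod 2, (if c = 1 then lam else 1) = 1 + lam by
            rw [show (Finset.univ : Finset (ZMod 2)) = {0, 1} by decide]
            norm_num]
          rw [Finset.prod_const, Finset.card_univ, Fintype.card_fin]
  -- real bound on badW.card
  have hB : (badW.card : ℝ) ≤ lam ^ (-T) * (1 + lam) ^ m := by
    have h1 : (badW.card : ℝ) = ∑ w ∈ badW, (1:ℝ) := by
      rw [Finset.sum_const, nsmul_eq_mul, mul_one]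
    have h2 : ∀ w ∈ badW, (1:ℝ) ≤ lam ^ (-T) * lam ^ (wtW w) := by
      intro w hw
      have hwT : (wtW w : ℝ) < T := (Finset.mem_filter.1 hw).2
      have : lam ^ (-T) * lam ^ (wtW w) = lam ^ ((wtW w : ℝ) - T) := by
        rw [← Real.rpow_natCast lam (wtW w), ← Real.rpow_add hlam0]
        ring_nf
      rw [this]
      exact Real.one_le_rpow_of_pos_of_le_one_of_nonpos hlam0 hlam1 (by linarith)
    calc (badW.card : ℝ) = ∑ w ∈ badW, (1:ℝ) := h1
      _ ≤ ∑ w ∈ badW, lam ^ (-T) * lam ^ (wtW w) := Finset.sum_le_sum h2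
      _ ≤ ∑ w : Fin m → ZMod 2, lam ^ (-T) * lam ^ (wtW w) := by
          apply Finset.sum_le_sum_of_subset_of_nonneg (Finset.subset_univ _)
          intro w _ _
          positivity
      _ = lam ^ (-T) * (1 + lam) ^ m := by
          rw [← Finset.mul_sum, hsum]
  -- counting
  have hcardF : Fintype.card F = 2 ^ m := by
    rw [Fintype.card_congr b.toEquiv, Fintype.card_fun, ZMod.card, Fintype.card_fin]
  have hcardV : ((Finset.univ : Finset (Fin n → ZMod 2)).erase 0).card = 2 ^ n - 1 := by
    rw [Finset.card_erase_of_mem (Finset.mem_univ 0), Finset.card_univ,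
      Fintype.card_fun, ZMod.card, Fintype.card_fin]
  have hchain : (2:ℝ) ^ m ≤ ((2:ℝ) ^ n - 1) * (lam ^ (-T) * (1 + lam) ^ m) := by
    have hc1 : ((2:ℝ) ^ m) ≤
        ∑ x ∈ (Finset.univ : Finset (Fin n → ZMod 2)).erase 0, ((Bad x).card : ℝ) := by
      have := card1
      rw [hcardF] at this
      exact_mod_cast this
    have hc2 : ∑ x ∈ (Finset.univ : Finset (Fin n → ZMod 2)).erase 0, ((Bad x).card : ℝ)
        ≤ ∑ x ∈ (Finset.univ : Finset (Fin n → ZMod 2)).erase 0, (badW.card : ℝ) := by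
      apply Finset.sum_le_sum
      intro x hx
      have hx0 : x ≠ 0 := (Finset.mem_erase.1 hx).1
      exact_mod_cast hBadle x hx0
    have hc3 : ∑ x ∈ (Finset.univ : Finset (Fin n → ZMod 2)).erase 0, (badW.card : ℝ)
        = ((2:ℝ) ^ n - 1) * (badW.card : ℝ) := by
      rw [Finset.sum_const, hcardV, nsmul_eq_mul]
      have h1 : (1:ℕ) ≤ 2 ^ n := Nat.one_le_two_pow
      push_cast [h1]
      ring
    have hc4 : ((2:ℝ) ^ n - 1) * (badW.card : ℝ)
        ≤ ((2:ℝ) ^ n - 1) * (lam ^ (-T) * (1 + lam) ^ m) := by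
      apply mul_le_mul_of_nonneg_left hB
      have : (1:ℝ) ≤ 2 ^ n := one_le_pow₀ (by norm_num : (1:ℝ) ≤ 2)
      linarith
    linarith
  have hpos : 0 < lam ^ (-T) * (1 + lam) ^ m := by
    have := Real.rpow_pos_of_pos hlam0 (-T)
    positivity
  have hfin : ((2:ℝ) ^ n - 1) * (lam ^ (-T) * (1 + lam) ^ m)
      < (2:ℝ) ^ n * (lam ^ (-T) * (1 + lam) ^ m) := by
    apply mul_lt_mul_of_pos_right _ hpos
    linarith
  have hkey := key_rpow hε0 hε1 n m hm
  rw [← hlam, ← hTdef] at hkey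
  linarith
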